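/- In the weighted game v_n = [3n³+n²; 2n², …, 2n² (2n+1 times), 1, …, 1 (2n³ times)], for n ≥ 11 the ratio of Banzhaf swing counts satisfies η₁(v_n)/η_{2n+2}(v_n) ≥ 2.6^n/(2n+1), where η₁(v_n) ≥ C(2n, n)·C(2n³, n³) and η_{2n+2}(v_n) = Σ_{j=0}^{2n+1} C(2n+1, j)·C(2n³−1, 3n³+n²−2n²j−1) ≤ (2n+1)·C(2n, n)·C(2n³, n³+n²). -/

import Mathlib

/-- Number of `i`-swings in the weighted game with quota `q`, weight function `w`,
and player set `P`. -/
def swingCount (q : ℕ) (w : ℕ → ℕ) (P : Finset ℕ) (i : ℕ) : ℕ :=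
  (((P.erase i).powerset).filter
    (fun S => (∑ j ∈ S, w j) < q ∧ q ≤ (∑ j ∈ S, w j) + w i)).card


lemma my_choose_anti (M : ℕ) : ∀ {a b : ℕ}, M ≤ 2*a+1 → a ≤ b → M.choose b ≤ M.choose a := by
  intro a b hM hab
  induction b, hab using Nat.le_induction with
  | base => exact le_rfl
  | succ c hac ih =>
    refine le_trans ?_ ih
    have h1 : M.choose (c+1) * (c+1) = M.choose c * (M - c) := Nat.choose_succ_right_eq M c
    have h2 : M - c ≤ c + 1 := by omega
    have h3 : M.choose (c+1) * (c+1) ≤ M.choose c * (c+1) := by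
      rw [h1]; exact Nat.mul_le_mul le_rfl h2
    exact Nat.le_of_mul_le_mul_right h3 (Nat.succ_pos c)

lemma my_prod_fact (a : ℕ) : ∀ d : ℕ, Nat.factorial a * ∏ k ∈ Finset.range d, (a + 1 + k) = Nat.factorial (a + d) := by
  intro d
  induction d with
  | zero => simp
  | succ d ih =>
    rw [Finset.prod_range_succ, ← Nat.mul_assoc, ih]
    rw [show a + (d+1) = (a+d) + 1 by ring, Nat.factorial_succ]
    ring

lemma my_choose_ratio (n : ℕ) (hn : 1 ≤ n) :
    (n+1)^(n^2) * Nat.choose (2*n^3) (n^3 + n^2) ≤ n^(n^2) * Nat.choose (2*n^3) (n^3) := by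
  have hnn : n^2 ≤ n^3 := Nat.pow_le_pow_right (by omega) (by omega)
  set a := n^3 - n^2 with ha
  have haa : a + n^2 = n^3 := by omega
  set P1 := ∏ k ∈ Finset.range (n^2), (n^3 + 1 + k) with hP1
  set P2 := ∏ k ∈ Finset.range (n^2), (a + 1 + k) with hP2
  have hP1pos : 0 < P1 := Finset.prod_pos (fun k _ => by positivity)
  have hF1 : Nat.factorial (n^3) * P1 = Nat.factorial (n^3 + n^2) := my_prod_fact _ _
  have hF2 : Nat.factorial a * P2 = Nat.factorial (n^3) := by
    have := my_prod_fact a (n^2); rwa [haa] at this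
  set X := Nat.choose (2*n^3) (n^3) with hX
  set Y := Nat.choose (2*n^3) (n^3 + n^2) with hY
  have hXf : X * Nat.factorial (n^3) * Nat.factorial (n^3) = Nat.factorial (2*n^3) := by
    have h := Nat.choose_mul_factorial_mul_factorial (n := 2*n^3) (k := n^3) (by omega)
    rwa [show 2*n^3 - n^3 = n^3 by omega] at h
  have hYf : Y * Nat.factorial (n^3+n^2) * Nat.factorial a = Nat.factorial (2*n^3) := by
    have h := Nat.choose_mul_factorial_mul_factorial (n := 2*n^3) (k := n^3+n^2) (by omega)
    rwa [show 2*n^3 - (n^3+n^2) = a by omega] at h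
  have hkey : X * P2 = Y * P1 := by
    have hfpos : 0 < Nat.factorial (n^3) := Nat.factorial_pos _
    have hapos : 0 < Nat.factorial a := Nat.factorial_pos _
    have h1 : X * Nat.factorial (n^3) * Nat.factorial (n^3)
        = Y * (Nat.factorial (n^3) * P1) * Nat.factorial a := by rw [hF1, hXf, hYf]
    have h2 : X * Nat.factorial (n^3) = Y * P1 * Nat.factorial a := by
      apply Nat.eq_of_mul_eq_mul_right hfpos
      calc X * Nat.factorial (n^3) * Nat.factorial (n^3)
          = Y * (Nat.factorial (n^3) * P1) * Nat.factorial a := h1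
        _ = Y * P1 * Nat.factorial a * Nat.factorial (n^3) := by ring
    have h3 : X * (Nat.factorial a * P2) = Y * P1 * Nat.factorial a := by rw [hF2]; exact h2
    apply Nat.eq_of_mul_eq_mul_right hapos
    calc X * P2 * Nat.factorial a = X * (Nat.factorial a * P2) := by ring
      _ = Y * P1 * Nat.factorial a := h3
  have hprod : (n+1)^(n^2) * P2 ≤ n^(n^2) * P1 := by
    have e1 : (n+1)^(n^2) * P2 = ∏ k ∈ Finset.range (n^2), ((n+1) * (a+1+k)) := by
      rw [Finset.prod_mul_distrib, Finset.prod_const, Finset.card_range, hP2]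
    have e2 : n^(n^2) * P1 = ∏ k ∈ Finset.range (n^2), (n * (n^3+1+k)) := by
      rw [Finset.prod_mul_distrib, Finset.prod_const, Finset.card_range, hP1]
    rw [e1, e2]
    apply Finset.prod_le_prod'
    intro k hk
    rw [Finset.mem_range] at hk
    have h4 : n * n^2 = n^3 := by ring
    have e3 : n * (n^3+1+k) = n * n^3 + n + n*k := by ring
    have e4 : (n+1)*(a+1+k) = n*a + n + n*k + (a + 1 + k) := by ring
    have e5 : n*n^3 = n*a + n*n^2 := by rw [← haa]; ring
    have hk1 : k + 1 ≤ n^2 := hk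
    linarith [e3, e4, e5, h4, haa, hk1]
  have hfin : ((n+1)^(n^2) * Y) * P1 ≤ (n^(n^2) * X) * P1 := by
    calc ((n+1)^(n^2) * Y) * P1 = (n+1)^(n^2) * (Y * P1) := by ring
      _ = (n+1)^(n^2) * (X * P2) := by rw [hkey]
      _ = X * ((n+1)^(n^2) * P2) := by ring
      _ ≤ X * (n^(n^2) * P1) := Nat.mul_le_mul le_rfl hprod
      _ = (n^(n^2) * X) * P1 := by ring
  exact Nat.le_of_mul_le_mul_right hfin hP1pos

lemma my_step (n : ℕ) (hn : 1 ≤ n) :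
    (((n:ℝ)+1)/n)^n ≤ (((n:ℝ)+2)/((n:ℝ)+1))^(n+1) := by
  have h1 : (0:ℝ) < n := by exact_mod_cast hn
  set x : ℝ := (n:ℝ) with hx
  have h2 : (0:ℝ) < x + 1 := by linarith
  have hinv : 1/(x+1)^2 ≤ 1 := by
    rw [div_le_one (by positivity)]
    nlinarith
  have hb := one_add_mul_le_pow (a := -(1/(x+1)^2)) (by linarith) (n+1)
  have e1 : 1 + ((n+1 : ℕ):ℝ) * (-(1/(x+1)^2)) = x/(x+1) := by
    push_cast
    rw [← hx]
    field_simp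
    ring
  have e2 : (1 + -(1/(x+1)^2)) = (x*(x+2))/(x+1)^2 := by
    field_simp
    ring
  rw [e1, e2] at hb
  rw [div_pow] at hb
  have hBpos : (0:ℝ) < ((x+1)^2)^(n+1) := by positivity
  rw [div_le_div_iff₀ h2 hBpos] at hb
  have key : (x+1)^(2*n+1) ≤ x^n * (x+2)^(n+1) := by
    have h3 : x * (x+1)^(2*n+2) ≤ x^(n+1) * (x+2)^(n+1) * (x+1) := by
      calc x * (x+1)^(2*n+2) = x * ((x+1)^2)^(n+1) := by rw [← pow_mul]; ring_nf
        _ ≤ (x*(x+2))^(n+1) * (x+1) := hb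
        _ = x^(n+1) * (x+2)^(n+1) * (x+1) := by rw [mul_pow]
    have h4 : x * ((x+1) * (x+1)^(2*n+1)) ≤ x * ((x+1) * (x^n * (x+2)^(n+1))) := by
      calc x * ((x+1) * (x+1)^(2*n+1)) = x * (x+1)^(2*n+2) := by ring_nf
        _ ≤ x^(n+1) * (x+2)^(n+1) * (x+1) := h3
        _ = x * ((x+1) * (x^n * (x+2)^(n+1))) := by ring
    have h5 := le_of_mul_le_mul_left h4 h1
    exact le_of_mul_le_mul_left h5 h2
  rw [div_pow, div_pow, div_le_div_iff₀ (by positivity) (by positivity)]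
  calc (x+1)^n * (x+1)^(n+1) = (x+1)^(2*n+1) := by rw [← pow_add]; ring_nf
    _ ≤ x^n * (x+2)^(n+1) := key
    _ = (x+2)^(n+1) * x^n := by ring

lemma my_pow26 (n : ℕ) (hn : 11 ≤ n) : (2.6:ℝ) ≤ (((n:ℝ)+1)/n)^n := by
  induction n, hn using Nat.le_induction with
  | base => norm_num
  | succ m hm ih =>
    refine le_trans (le_trans ih (my_step m (by omega))) ?_
    push_cast
    ring_nf
    exact le_rfl

lemma my_split (n : ℕ) {A C : Finset ℕ} (hA : A ⊆ Finset.range (2*n+1))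
    (hC : ∀ x ∈ C, 2*n+1 ≤ x) :
    (A ∪ C) ∩ Finset.range (2*n+1) = A ∧ (A ∪ C) \ Finset.range (2*n+1) = C := by
  constructor
  · ext x
    simp only [Finset.mem_inter, Finset.mem_union, Finset.mem_range]
    constructor
    · rintro ⟨h | h, hlt⟩
      · exact h
      · exact absurd hlt (by have := hC x h; omega)
    · intro h
      exact ⟨Or.inl h, Finset.mem_range.1 (hA h)⟩
  · ext x
    simp only [Finset.mem_sdiff, Finset.mem_union, Finset.mem_range]
    constructor
    · rintro ⟨h | h, hge⟩
      · exact absurd (Finset.mem_range.1 (hA h)) hge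
      · exact h
    · intro h
      exact ⟨Or.inr h, by have := hC x h; omega⟩

lemma my_sum (n : ℕ) (S : Finset ℕ) :
    ∑ j ∈ S, (if j < 2*n+1 then 2*n^2 else 1)
      = 2*n^2 * (S ∩ Finset.range (2*n+1)).card + (S \ Finset.range (2*n+1)).card := by
  have hS : (S ∩ Finset.range (2*n+1)) ∪ (S \ Finset.range (2*n+1)) = S := by
    ext x; simp only [Finset.mem_union, Finset.mem_inter, Finset.mem_sdiff]; tauto
  have hdisj : Disjoint (S ∩ Finset.range (2*n+1)) (S \ Finset.range (2*n+1)) := by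
    rw [Finset.disjoint_left]
    intro x hx hx'
    simp only [Finset.mem_inter, Finset.mem_sdiff] at hx hx'
    exact hx'.2 hx.2
  conv_lhs => rw [← hS]
  rw [Finset.sum_union hdisj]
  have h1 : ∑ j ∈ S ∩ Finset.range (2*n+1), (if j < 2*n+1 then 2*n^2 else 1)
      = 2*n^2 * (S ∩ Finset.range (2*n+1)).card := by
    rw [Finset.sum_congr rfl (fun j hj => ?_), Finset.sum_const, smul_eq_mul, mul_comm]
    rw [if_pos (Finset.mem_range.1 (Finset.mem_inter.1 hj).2)]
  have h2 : ∑ j ∈ S \ Finset.range (2*n+1), (if j < 2*n+1 then 2*n^2 else 1)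
      = (S \ Finset.range (2*n+1)).card := by
    rw [Finset.sum_congr rfl (fun j hj => ?_), Finset.sum_const, smul_eq_mul, mul_one]
    rw [if_neg (by simpa using (Finset.mem_sdiff.1 hj).2)]
  rw [h1, h2]

lemma my_lower (n : ℕ) (hn : 1 ≤ n) :
    Nat.choose (2*n) n * Nat.choose (2*n^3) (n^3)
      ≤ swingCount (3*n^3+n^2) (fun i => if i < 2*n+1 then 2*n^2 else 1)
          (Finset.range (2*n+1+2*n^3)) 0 := by
  classical
  set q := 3*n^3+n^2 with hq
  set wt : ℕ → ℕ := fun i => if i < 2*n+1 then 2*n^2 else 1 with hwt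
  set B := Finset.range (2*n+1) with hB
  set E := B.erase 0 with hE
  set T := Finset.Ico (2*n+1) (2*n+1+2*n^3) with hT
  set P := Finset.range (2*n+1+2*n^3) with hP
  set F := ((P.erase 0).powerset).filter
      (fun S => (∑ j ∈ S, wt j) < q ∧ q ≤ (∑ j ∈ S, wt j) + wt 0) with hF
  have hEcard : E.card = 2*n := by
    rw [hE, Finset.card_erase_of_mem (by simp [hB]), hB, Finset.card_range]
    omega
  have hTcard : T.card = 2*n^3 := by rw [hT, Nat.card_Ico]; omega
  set D := (E.powersetCard n) ×ˢ (T.powersetCard (n^3)) with hD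
  have hDcard : D.card = Nat.choose (2*n) n * Nat.choose (2*n^3) (n^3) := by
    rw [hD, Finset.card_product, Finset.card_powersetCard, Finset.card_powersetCard,
      hEcard, hTcard]
  have hn2 : 0 < n^2 := by positivity
  have hn3 : n^2 ≤ n^3 := Nat.pow_le_pow_right (by omega) (by omega)
  -- main injection
  have hinj : D.card ≤ F.card := by
    apply Finset.card_le_card_of_injOn (fun p => p.1 ∪ p.2)
    · rintro ⟨A, C⟩ hp
      simp only [Finset.mem_coe, hD] at hp
      rw [Finset.mem_product, Finset.mem_powersetCard, Finset.mem_powersetCard] at hp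
      obtain ⟨⟨hAE, hAc⟩, hCT, hCc⟩ := hp
      have hAB : A ⊆ B := hAE.trans (Finset.erase_subset _ _)
      have hCge : ∀ x ∈ C, 2*n+1 ≤ x := fun x hx => (Finset.mem_Ico.1 (hCT hx)).1
      obtain ⟨hsplit1, hsplit2⟩ := my_split n hAB hCge
      have hsum : ∑ j ∈ A ∪ C, wt j = 2*n^2 * n + n^3 := by
        rw [hwt]
        rw [my_sum n (A ∪ C)]
        rw [hsplit1, hsplit2, hAc, hCc]
      rw [Finset.mem_coe, hF, Finset.mem_filter, Finset.mem_powerset]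
      refine ⟨?_, ?_, ?_⟩
      · intro x hx
        rcases Finset.mem_union.1 hx with h | h
        · have := hAE h
          rw [hE, Finset.mem_erase] at this
          rw [Finset.mem_erase]
          refine ⟨this.1, ?_⟩
          rw [hP, Finset.mem_range]
          have := Finset.mem_range.1 (this.2 : x ∈ B)
          omega
        · have := Finset.mem_Ico.1 (hCT h)
          rw [Finset.mem_erase, hP, Finset.mem_range]
          constructor
          · omega
          · omega
      · rw [hsum, hq]
        have e : 2*n^2*n = 2*n^3 := by ring
        omega
      · rw [hsum, hq]
        have hwt0 : wt 0 = 2*n^2 := by rw [hwt]; simp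
        rw [hwt0]
        have e : 2*n^2*n = 2*n^3 := by ring
        omega
    · rintro ⟨A, C⟩ hp ⟨A', C'⟩ hp' heq
      rw [Finset.mem_coe, hD, Finset.mem_product, Finset.mem_powersetCard, Finset.mem_powersetCard] at hp hp'
      obtain ⟨⟨hAE, _⟩, hCT, _⟩ := hp
      obtain ⟨⟨hAE', _⟩, hCT', _⟩ := hp'
      have hAB : A ⊆ B := hAE.trans (Finset.erase_subset _ _)
      have hAB' : A' ⊆ B := hAE'.trans (Finset.erase_subset _ _)
      have hCge : ∀ x ∈ C, 2*n+1 ≤ x := fun x hx => (Finset.mem_Ico.1 (hCT hx)).1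
      have hCge' : ∀ x ∈ C', 2*n+1 ≤ x := fun x hx => (Finset.mem_Ico.1 (hCT' hx)).1
      obtain ⟨h1, h2⟩ := my_split n hAB hCge
      obtain ⟨h1', h2'⟩ := my_split n hAB' hCge'
      have heq' : A ∪ C = A' ∪ C' := heq
      have hAA : A = A' := by rw [← h1, ← h1', heq']
      have hCC : C = C' := by rw [← h2, ← h2', heq']
      simp [hAA, hCC]
  rw [swingCount]
  calc Nat.choose (2*n) n * Nat.choose (2*n^3) (n^3) = D.card := hDcard.symm
    _ ≤ F.card := hinj

lemma my_term_bound (n j : ℕ) (hn : 1 ≤ n) (hlo : n^3+n^2 ≤ 2*n^2*j)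
    (hhi : 2*n^2*j < 3*n^3+n^2) :
    Nat.choose (2*n^3-1) (3*n^3+n^2-1-2*n^2*j) ≤ Nat.choose (2*n^3) (n^3+n^2) := by
  have hn2 : 0 < n^2 := by positivity
  have hn3 : n^2 ≤ n^3 := Nat.pow_le_pow_right (by omega) (by omega)
  set m := 3*n^3+n^2-1-2*n^2*j with hm
  have hstep : Nat.choose (2*n^3-1) (n^3+n^2-1) ≤ Nat.choose (2*n^3) (n^3+n^2) := by
    have e : 2*n^3 = (2*n^3-1)+1 := by omega
    have e2 : n^3+n^2 = (n^3+n^2-1)+1 := by omega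
    rw [e, e2, Nat.choose_succ_succ]
    exact Nat.le_add_right _ _
  have hMa : 2*n^3-1 ≤ 2*(n^3+n^2-1)+1 := by omega
  -- j ≤ n or n+1 ≤ j
  rcases le_or_gt j n with hj | hj
  · -- m ≥ n^3+n^2-1
    have hjle : 2*n^2*j ≤ 2*n^3 := by
      calc 2*n^2*j ≤ 2*n^2*n := by exact Nat.mul_le_mul le_rfl hj
        _ = 2*n^3 := by ring
    have hge : n^3+n^2-1 ≤ m := by omega
    exact le_trans (my_choose_anti _ hMa hge) hstep
  · -- m ≤ n^3-n^2-1, use symmetry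
    have hjge : 2*n^3+2*n^2 ≤ 2*n^2*j := by
      calc 2*n^3+2*n^2 = 2*n^2*(n+1) := by ring
        _ ≤ 2*n^2*j := Nat.mul_le_mul le_rfl hj
    have hmle : m + n^2 + n^2 ≤ n^3 + n^3 - 1 - n^3 + n^2 := by omega
    have hmle' : m ≤ n^3 - n^2 - 1 := by omega
    have hmM : m ≤ 2*n^3-1 := by omega
    have hsymm : Nat.choose (2*n^3-1) (2*n^3-1-m) = Nat.choose (2*n^3-1) m :=
      Nat.choose_symm hmM
    have hb : n^3+n^2-1 ≤ 2*n^3-1-m := by omega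
    calc Nat.choose (2*n^3-1) m = Nat.choose (2*n^3-1) (2*n^3-1-m) := hsymm.symm
      _ ≤ Nat.choose (2*n^3-1) (n^3+n^2-1) := my_choose_anti _ hMa hb
      _ ≤ Nat.choose (2*n^3) (n^3+n^2) := hstep

lemma my_upper (n : ℕ) (hn : 1 ≤ n) :
    swingCount (3*n^3+n^2) (fun i => if i < 2*n+1 then 2*n^2 else 1)
          (Finset.range (2*n+1+2*n^3)) (2*n+1)
      ≤ (2*n+1) * (Nat.choose (2*n) n * Nat.choose (2*n^3) (n^3+n^2)) := by
  classical
  set q := 3*n^3+n^2 with hq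
  set wt : ℕ → ℕ := fun i => if i < 2*n+1 then 2*n^2 else 1 with hwt
  set B := Finset.range (2*n+1) with hB
  set T' := Finset.Ico (2*n+2) (2*n+1+2*n^3) with hT'
  set P := Finset.range (2*n+1+2*n^3) with hP
  have hn2 : 0 < n^2 := by positivity
  have hn3 : n^2 ≤ n^3 := Nat.pow_le_pow_right (by omega) (by omega)
  have hBcard : B.card = 2*n+1 := by rw [hB, Finset.card_range]
  have hT'card : T'.card = 2*n^3-1 := by rw [hT', Nat.card_Ico]; omega
  set F := ((P.erase (2*n+1)).powerset).filter
      (fun S => (∑ j ∈ S, wt j) < q ∧ q ≤ (∑ j ∈ S, wt j) + wt (2*n+1)) with hF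
  set J := (Finset.range (2*n+2)).filter
      (fun j => n^3+n^2 ≤ 2*n^2*j ∧ 2*n^2*j < 3*n^3+n^2) with hJ
  set U := J.biUnion (fun j => (B.powersetCard j) ×ˢ (T'.powersetCard (3*n^3+n^2-1-2*n^2*j)))
    with hU
  have hwt1 : wt (2*n+1) = 1 := by rw [hwt]; simp
  -- step 1 : F.card ≤ U.card
  have step1 : F.card ≤ U.card := by
    apply Finset.card_le_card_of_injOn (fun S => (S ∩ B, S \ B))
    · intro S hS
      simp only [Finset.mem_coe, hF] at hS
      rw [Finset.mem_filter, Finset.mem_powerset] at hS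
      obtain ⟨hsub, hlt, hge⟩ := hS
      rw [hwt1] at hge
      have hsum := my_sum n S
      rw [← hwt] at hsum
      set jj := (S ∩ B).card with hjj
      set s := (S \ B).card with hs
      have heq : 2*n^2*jj + s + 1 = 3*n^3+n^2 := by
        rw [hsum] at hlt hge
        have hqq : q = 3*n^3+n^2 := hq
        omega
      have hSB : S \ B ⊆ T' := by
        intro x hx
        obtain ⟨hxS, hxB⟩ := Finset.mem_sdiff.1 hx
        have hxP := hsub hxS
        rw [Finset.mem_erase, hP, Finset.mem_range] at hxP
        rw [hT', Finset.mem_Ico]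
        rw [hB, Finset.mem_range] at hxB
        omega
      have hscard : s ≤ 2*n^3-1 := by
        rw [hs, ← hT'card]; exact Finset.card_le_card hSB
      have hjmem : jj ∈ J := by
        rw [hJ, Finset.mem_filter, Finset.mem_range]
        refine ⟨?_, ?_, ?_⟩
        · have : jj ≤ B.card := Finset.card_le_card (Finset.inter_subset_right)
          omega
        · omega
        · omega
      rw [Finset.mem_coe, Finset.mem_biUnion]
      refine ⟨jj, hjmem, ?_⟩
      rw [Finset.mem_product, Finset.mem_powersetCard, Finset.mem_powersetCard]
      have hseq : 3*n^3+n^2-1-2*n^2*jj = s := by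
        rw [← heq, Nat.add_sub_cancel, Nat.add_sub_cancel_left]
      exact ⟨⟨Finset.inter_subset_right, rfl⟩, hSB, hseq.symm⟩
    · intro S hS S' hS' heq
      have h1 : S ∩ B ∪ S \ B = S := by
        ext x; simp only [Finset.mem_union, Finset.mem_inter, Finset.mem_sdiff]; tauto
      have h1' : S' ∩ B ∪ S' \ B = S' := by
        ext x; simp only [Finset.mem_union, Finset.mem_inter, Finset.mem_sdiff]; tauto
      have e1 : S ∩ B = S' ∩ B := congrArg Prod.fst heq
      have e2 : S \ B = S' \ B := congrArg Prod.snd heq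
      rw [← h1, ← h1', e1, e2]
  -- step 2 : U.card ≤ J.card * (choose (2n+1) n * choose (2n^3) (n^3+n^2))
  have step2 : U.card ≤ J.card * (Nat.choose (2*n+1) n * Nat.choose (2*n^3) (n^3+n^2)) := by
    rw [hU]
    refine le_trans (Finset.card_biUnion_le) ?_
    have hterm : ∀ j ∈ J, ((B.powersetCard j) ×ˢ (T'.powersetCard (3*n^3+n^2-1-2*n^2*j))).card
        ≤ Nat.choose (2*n+1) n * Nat.choose (2*n^3) (n^3+n^2) := by
      intro j hj
      rw [hJ, Finset.mem_filter] at hj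
      obtain ⟨-, hlo, hhi⟩ := hj
      rw [Finset.card_product, Finset.card_powersetCard, Finset.card_powersetCard,
        hBcard, hT'card]
      apply Nat.mul_le_mul
      · have h := Nat.choose_le_middle j (2*n+1)
        rwa [show (2*n+1)/2 = n by omega] at h
      · exact my_term_bound n j hn hlo hhi
    calc ∑ j ∈ J, ((B.powersetCard j) ×ˢ (T'.powersetCard (3*n^3+n^2-1-2*n^2*j))).card
        ≤ ∑ _j ∈ J, (Nat.choose (2*n+1) n * Nat.choose (2*n^3) (n^3+n^2)) :=
          Finset.sum_le_sum hterm
      _ = J.card * (Nat.choose (2*n+1) n * Nat.choose (2*n^3) (n^3+n^2)) := by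
          rw [Finset.sum_const, smul_eq_mul]
  have step3 : J.card ≤ n+1 := by
    have hJsub : J ⊆ Finset.Icc ((n+2)/2) ((3*n)/2) := by
      intro j hj
      rw [hJ, Finset.mem_filter, Finset.mem_range] at hj
      obtain ⟨hjr, hlo, hhi⟩ := hj
      have h2j : n+1 ≤ 2*j := by
        by_contra hcon
        push_neg at hcon
        have : 2*n^2*j ≤ n^2*n := by
          calc 2*n^2*j = n^2*(2*j) := by ring
            _ ≤ n^2*n := Nat.mul_le_mul le_rfl (by omega)
        have hxx : n^2*n = n^3 := by ring
        omega
      have h2j' : 2*j ≤ 3*n := by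
        by_contra hcon
        push_neg at hcon
        have : n^2*(3*n+1) ≤ 2*n^2*j := by
          calc n^2*(3*n+1) ≤ n^2*(2*j) := Nat.mul_le_mul le_rfl (by omega)
            _ = 2*n^2*j := by ring
        have hxx : n^2*(3*n+1) = 3*n^3+n^2 := by ring
        omega
      rw [Finset.mem_Icc]
      omega
    have := Finset.card_le_card hJsub
    rw [Nat.card_Icc] at this
    omega
  have step4 : (n+1) * Nat.choose (2*n+1) n = (2*n+1) * Nat.choose (2*n) n := by
    have h := Nat.add_one_mul_choose_eq (2*n) n
    have hsymm : Nat.choose (2*n+1) (n+1) = Nat.choose (2*n+1) n := by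
      have h2 := Nat.choose_symm (n := 2*n+1) (k := n+1) (by omega)
      rw [show 2*n+1-(n+1) = n by omega] at h2
      exact h2.symm
    calc (n+1) * Nat.choose (2*n+1) n = Nat.choose (2*n+1) (n+1) * (n+1) := by
          rw [hsymm]; ring
      _ = (2*n+1) * Nat.choose (2*n) n := by rw [← h]
  calc F.card ≤ U.card := step1
    _ ≤ J.card * (Nat.choose (2*n+1) n * Nat.choose (2*n^3) (n^3+n^2)) := step2
    _ ≤ (n+1) * (Nat.choose (2*n+1) n * Nat.choose (2*n^3) (n^3+n^2)) :=
        Nat.mul_le_mul step3 le_rfl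
    _ = ((n+1) * Nat.choose (2*n+1) n) * Nat.choose (2*n^3) (n^3+n^2) := by ring
    _ = ((2*n+1) * Nat.choose (2*n) n) * Nat.choose (2*n^3) (n^3+n^2) := by rw [step4]
    _ = (2*n+1) * (Nat.choose (2*n) n * Nat.choose (2*n^3) (n^3+n^2)) := by ring

lemma my_pos (n : ℕ) (hn : 1 ≤ n) :
    1 ≤ swingCount (3*n^3+n^2) (fun i => if i < 2*n+1 then 2*n^2 else 1)
          (Finset.range (2*n+1+2*n^3)) (2*n+1) := by
  classical
  have hn2 : 0 < n^2 := by positivity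
  have hn3 : n^2 ≤ n^3 := Nat.pow_le_pow_right (by omega) (by omega)
  have hn1 : 1 ≤ n^2 := hn2
  set A := Finset.range n with hA
  set C := Finset.Ico (2*n+2) (2*n+2+(n^3+n^2-1)) with hC
  set S₀ := A ∪ C with hS₀
  have hAB : A ⊆ Finset.range (2*n+1) := by
    intro x hx; rw [Finset.mem_range] at *; omega
  have hCge : ∀ x ∈ C, 2*n+1 ≤ x := by
    intro x hx; rw [hC, Finset.mem_Ico] at hx; omega
  obtain ⟨h1, h2⟩ := my_split n hAB hCge
  have hAcard : A.card = n := Finset.card_range n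
  have hCcard : C.card = n^3+n^2-1 := by rw [hC, Nat.card_Ico]; omega
  have hsum : ∑ j ∈ S₀, (if j < 2*n+1 then 2*n^2 else 1) = 3*n^3+n^2-1 := by
    rw [my_sum n S₀, hS₀, h1, h2, hAcard, hCcard]
    have e : 2*n^2*n = 2*n^3 := by ring
    omega
  rw [swingCount]
  rw [Nat.one_le_iff_ne_zero, ← Nat.pos_iff_ne_zero, Finset.card_pos]
  refine ⟨S₀, ?_⟩
  rw [Finset.mem_filter, Finset.mem_powerset]
  refine ⟨?_, ?_, ?_⟩
  · intro x hx
    rw [Finset.mem_erase, Finset.mem_range]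
    rcases Finset.mem_union.1 hx with h | h
    · rw [hA, Finset.mem_range] at h
      omega
    · rw [hC, Finset.mem_Ico] at h
      omega
  · rw [hsum]; omega
  · rw [hsum]
    simp only [lt_irrefl, if_neg, if_false]
    omega

theorem stmt17 (n : ℕ) (hn : 11 ≤ n)
    (wt : ℕ → ℕ) (hwt : wt = fun i => if i < 2 * n + 1 then 2 * n ^ 2 else 1)
    (P : Finset ℕ) (hP : P = Finset.range (2 * n + 1 + 2 * n ^ 3)) :
    (2.6 : ℝ) ^ n / (2 * (n : ℝ) + 1) ≤
      (swingCount (3 * n ^ 3 + n ^ 2) wt P 0 : ℝ) /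
        (swingCount (3 * n ^ 3 + n ^ 2) wt P (2 * n + 1) : ℝ) := by
  subst hwt hP
  have hn1 : 1 ≤ n := by omega
  have hnR : (0:ℝ) < n := by exact_mod_cast hn1
  have hlow := my_lower n hn1
  have hup := my_upper n hn1
  have hpos := my_pos n hn1
  set η₀ := swingCount (3*n^3+n^2) (fun i => if i < 2*n+1 then 2*n^2 else 1)
      (Finset.range (2*n+1+2*n^3)) 0 with hη₀
  set η₁ := swingCount (3*n^3+n^2) (fun i => if i < 2*n+1 then 2*n^2 else 1)
      (Finset.range (2*n+1+2*n^3)) (2*n+1) with hη₁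
  set A := Nat.choose (2*n) n with hA
  set X := Nat.choose (2*n^3) (n^3) with hX
  set Y := Nat.choose (2*n^3) (n^3+n^2) with hY
  have hb : (0:ℝ) < (η₁:ℝ) := by exact_mod_cast hpos
  have hkey : (2.6:ℝ)^n * (Y:ℝ) ≤ (X:ℝ) := by
    have h1 : ((n:ℝ)+1)^(n^2) * (Y:ℝ) ≤ (n:ℝ)^(n^2) * (X:ℝ) := by
      have := my_choose_ratio n hn1
      have h2 : (((n+1)^(n^2) * Y : ℕ) : ℝ) ≤ ((n^(n^2) * X : ℕ) : ℝ) := by exact_mod_cast this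
      push_cast at h2
      exact h2
    have h3 : (((n:ℝ)+1)/n)^(n^2) * (Y:ℝ) ≤ (X:ℝ) := by
      rw [div_pow]
      rw [div_mul_eq_mul_div, div_le_iff₀ (by positivity)]
      calc ((n:ℝ)+1)^(n^2) * (Y:ℝ) ≤ (n:ℝ)^(n^2) * (X:ℝ) := h1
        _ = (X:ℝ) * (n:ℝ)^(n^2) := by ring
    refine le_trans ?_ h3
    apply mul_le_mul_of_nonneg_right _ (by positivity)
    calc (2.6:ℝ)^n ≤ ((((n:ℝ)+1)/n)^n)^n := by
          apply pow_le_pow_left₀ (by norm_num) (my_pow26 n hn)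
      _ = (((n:ℝ)+1)/n)^(n^2) := by rw [← pow_mul, sq]
  rw [div_le_div_iff₀ (by positivity) hb]
  have hlowR : (A:ℝ) * (X:ℝ) ≤ (η₀:ℝ) := by exact_mod_cast hlow
  have hupR : (η₁:ℝ) ≤ (2*(n:ℝ)+1) * ((A:ℝ)*(Y:ℝ)) := by
    exact_mod_cast hup
  calc (2.6:ℝ)^n * (η₁:ℝ) ≤ (2.6:ℝ)^n * ((2*(n:ℝ)+1) * ((A:ℝ)*(Y:ℝ))) := by
        apply mul_le_mul_of_nonneg_left hupR (by positivity)
    _ = (2*(n:ℝ)+1)*(A:ℝ)*((2.6:ℝ)^n*(Y:ℝ)) := by ring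
    _ ≤ (2*(n:ℝ)+1)*(A:ℝ)*(X:ℝ) := by
        apply mul_le_mul_of_nonneg_left hkey (by positivity)
    _ = (2*(n:ℝ)+1)*((A:ℝ)*(X:ℝ)) := by ring
    _ ≤ (2*(n:ℝ)+1)*(η₀:ℝ) := by
        apply mul_le_mul_of_nonneg_left hlowR (by positivity)
    _ = (η₀:ℝ)*(2*(n:ℝ)+1) := by ring
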